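/- (Key step of Theorem 5.3/5.5) Let G: Θ → ℝ be C² on a neighborhood U of an interior point θ* of Θ ⊂ ℝ^q, with ∇G(θ*) = 0 and ∇²G(θ*) invertible, and let G_n be C² with minimizers θ̂_n → θ*. If ∇²G_n → ∇²G uniformly on U and ‖∇G_n(θ*)‖ ≤ c a_n with a_n → 0, then ‖θ̂_n − θ*‖ = O(a_n). -/

import Mathlib

open Filter

set_option maxHeartbeats 1000000
set_option synthInstance.maxHeartbeats 100000

lemma gradCD {q : ℕ} {G : EuclideanSpace ℝ (Fin q) → ℝ} {U : Set (EuclideanSpace ℝ (Fin q))}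
    (hU : IsOpen U) (hG : ContDiffOn ℝ 2 G U) : ContDiffOn ℝ 1 (gradient G) U := by
  have h1 : ContDiffOn ℝ 1 (fun y => fderiv ℝ G y) U :=
    hG.fderiv_of_isOpen hU (by norm_num)
  exact ((InnerProductSpace.toDual ℝ _).symm.contDiff).comp_contDiffOn h1


/-- Abstract Taylor-expansion rate argument: if `G` is `C²` near an interior minimizer
`θ*` of `Θ` with vanishing gradient and invertible Hessian, `Gₙ` are `C²` with minimizers
`θ̂ₙ → θ*`, the Hessians of `Gₙ` converge uniformly to that of `G` on `U`, and
`‖∇Gₙ(θ*)‖ ≤ c aₙ` with `aₙ → 0`, then `‖θ̂ₙ − θ*‖ = O(aₙ)`. -/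
theorem stmt14 {q : ℕ} (Θ' : Set (EuclideanSpace ℝ (Fin q)))
    (G : EuclideanSpace ℝ (Fin q) → ℝ) (Gn : ℕ → EuclideanSpace ℝ (Fin q) → ℝ)
    (θstar : EuclideanSpace ℝ (Fin q)) (hθ : θstar ∈ interior Θ')
    (U : Set (EuclideanSpace ℝ (Fin q))) (hU : IsOpen U) (hθU : θstar ∈ U) (hUΘ : U ⊆ Θ')
    (hG : ContDiffOn ℝ 2 G U) (hGn : ∀ n, ContDiffOn ℝ 2 (Gn n) U)
    (hgrad0 : gradient G θstar = 0)
    (hinv : ∃ T : EuclideanSpace ℝ (Fin q) ≃L[ℝ] EuclideanSpace ℝ (Fin q),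
      (T : EuclideanSpace ℝ (Fin q) →L[ℝ] EuclideanSpace ℝ (Fin q)) =
        fderiv ℝ (gradient G) θstar)
    (θhat : ℕ → EuclideanSpace ℝ (Fin q)) (hmem : ∀ n, θhat n ∈ Θ')
    (hmin : ∀ n, ∀ θ ∈ Θ', Gn n (θhat n) ≤ Gn n θ)
    (hconv : Tendsto θhat atTop (nhds θstar))
    (hHess : TendstoUniformlyOn (fun n θ => fderiv ℝ (gradient (Gn n)) θ)
      (fun θ => fderiv ℝ (gradient G) θ) atTop U)
    (a : ℕ → ℝ) (ha : ∀ n, 0 ≤ a n) (ha0 : Tendsto a atTop (nhds 0))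
    (c : ℝ) (hgradb : ∀ n, ‖gradient (Gn n) θstar‖ ≤ c * a n) :
    ∃ C : ℝ, ∀ᶠ n in atTop, ‖θhat n - θstar‖ ≤ C * a n := by
  obtain ⟨T, hT⟩ := hinv
  set A : EuclideanSpace ℝ (Fin q) →L[ℝ] EuclideanSpace ℝ (Fin q) :=
    fderiv ℝ (gradient G) θstar with hA
  set K : ℝ := ‖(T.symm : EuclideanSpace ℝ (Fin q) →L[ℝ] EuclideanSpace ℝ (Fin q))‖ + 1 with hKdef
  have hK0 : 0 < K := by positivity
  have hTA : ∀ v, (T : EuclideanSpace ℝ (Fin q) →L[ℝ] EuclideanSpace ℝ (Fin q)) v = A v :=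
    fun v => by rw [hT]
  have hAv : ∀ v, ‖v‖ ≤ K * ‖A v‖ := by
    intro v
    have h1 : ‖v‖ = ‖T.symm ((T : EuclideanSpace ℝ (Fin q) →L[ℝ] EuclideanSpace ℝ (Fin q)) v)‖ :=
      congrArg norm (T.symm_apply_apply v).symm
    calc ‖v‖ = ‖T.symm ((T : EuclideanSpace ℝ (Fin q) →L[ℝ] EuclideanSpace ℝ (Fin q)) v)‖ := h1
      _ ≤ ‖(T.symm : EuclideanSpace ℝ (Fin q) →L[ℝ] EuclideanSpace ℝ (Fin q))‖ *
            ‖(T : EuclideanSpace ℝ (Fin q) →L[ℝ] EuclideanSpace ℝ (Fin q)) v‖ :=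
          (T.symm : EuclideanSpace ℝ (Fin q) →L[ℝ] EuclideanSpace ℝ (Fin q)).le_opNorm _
      _ ≤ K * ‖(T : EuclideanSpace ℝ (Fin q) →L[ℝ] EuclideanSpace ℝ (Fin q)) v‖ :=
          mul_le_mul_of_nonneg_right (by rw [hKdef]; linarith) (norm_nonneg _)
      _ = K * ‖A v‖ := by rw [hTA v]
  have hgradG : ContDiffOn ℝ 1 (gradient G) U := gradCD hU hG
  have hgradGn : ∀ n, ContDiffOn ℝ 1 (gradient (Gn n)) U := fun n => gradCD hU (hGn n)
  have hcont : ContinuousOn (fun θ => fderiv ℝ (gradient G) θ) U :=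
    hgradG.continuousOn_fderiv_of_isOpen hU le_rfl
  have hca : ContinuousAt (fun θ => fderiv ℝ (gradient G) θ) θstar :=
    hcont.continuousAt (hU.mem_nhds hθU)
  set ε : ℝ := (4 * K)⁻¹ with hεdef
  have hε0 : 0 < ε := by positivity
  have hball : ∀ᶠ θ in nhds θstar, θ ∈ U ∧ ‖fderiv ℝ (gradient G) θ - A‖ < ε := by
    filter_upwards [hU.mem_nhds hθU, hca (Metric.ball_mem_nhds A hε0)] with θ h1 h2
    refine ⟨h1, ?_⟩
    simp only [Set.mem_preimage, Metric.mem_ball, dist_eq_norm] at h2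
    exact h2
  obtain ⟨r, hr0, hr⟩ := Metric.eventually_nhds_iff_ball.1 hball
  have h1 : ∀ᶠ n in atTop, θhat n ∈ Metric.ball θstar r :=
    hconv (Metric.ball_mem_nhds _ hr0)
  have h2 : ∀ᶠ n in atTop, ∀ θ ∈ U,
      ‖fderiv ℝ (gradient (Gn n)) θ - fderiv ℝ (gradient G) θ‖ < ε := by
    filter_upwards [(Metric.tendstoUniformlyOn_iff.1 hHess) ε hε0] with n hn θ hθ'
    have h := hn θ hθ'
    rw [dist_eq_norm, norm_sub_rev] at h
    exact h
  refine ⟨2 * K * c, ?_⟩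
  filter_upwards [h1, h2] with n hn1 hn2
  set v := θhat n - θstar with hv
  have hballU : Metric.ball θstar r ⊆ U := fun x hx => (hr x hx).1
  have hnU : θhat n ∈ U := hballU hn1
  have hlm : IsLocalMin (Gn n) (θhat n) := by
    filter_upwards [hU.mem_nhds hnU] with θ hθ'
    exact hmin n θ (hUΘ hθ')
  have hgz : gradient (Gn n) (θhat n) = 0 := by
    have h0 : fderiv ℝ (Gn n) (θhat n) = 0 := hlm.fderiv_eq_zero
    show (InnerProductSpace.toDual ℝ _).symm (fderiv ℝ (Gn n) (θhat n)) = 0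
    rw [h0, map_zero]
  have hdiff : ∀ x ∈ Metric.ball θstar r,
      HasFDerivWithinAt (fun θ => gradient (Gn n) θ - A θ)
        (fderiv ℝ (gradient (Gn n)) x - A) (Metric.ball θstar r) x := by
    intro x hx
    have hdx : DifferentiableAt ℝ (gradient (Gn n)) x :=
      ((hgradGn n).differentiableOn one_ne_zero).differentiableAt (hU.mem_nhds (hballU hx))
    exact (hdx.hasFDerivAt.sub A.hasFDerivAt).hasFDerivWithinAt
  have hbound : ∀ x ∈ Metric.ball θstar r,
      ‖fderiv ℝ (gradient (Gn n)) x - A‖ ≤ (2 * K)⁻¹ := by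
    intro x hx
    have e1 : ‖fderiv ℝ (gradient (Gn n)) x - fderiv ℝ (gradient G) x‖ < ε :=
      hn2 x (hballU hx)
    have e2 : ‖fderiv ℝ (gradient G) x - A‖ < ε := (hr x hx).2
    have tri : ‖fderiv ℝ (gradient (Gn n)) x - A‖
        ≤ ‖fderiv ℝ (gradient (Gn n)) x - fderiv ℝ (gradient G) x‖
          + ‖fderiv ℝ (gradient G) x - A‖ :=
      norm_sub_le_norm_sub_add_norm_sub _ _ _
    have hεε : ε + ε = (2 * K)⁻¹ := by
      rw [hεdef]; field_simp; ring
    linarith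
  have hmvt := (convex_ball θstar r).norm_image_sub_le_of_norm_hasFDerivWithin_le
    hdiff hbound (Metric.mem_ball_self hr0) hn1
  have key : ‖A v + gradient (Gn n) θstar‖ ≤ (2 * K)⁻¹ * ‖v‖ := by
    have heq : (gradient (Gn n) (θhat n) - A (θhat n)) - (gradient (Gn n) θstar - A θstar)
        = -(A v + gradient (Gn n) θstar) := by
      rw [hgz, hv, map_sub]
      abel
    rw [heq, norm_neg] at hmvt
    exact hmvt
  have hAvb : ‖A v‖ ≤ (2 * K)⁻¹ * ‖v‖ + c * a n := by
    have heq : A v = (A v + gradient (Gn n) θstar) - gradient (Gn n) θstar := by abel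
    calc ‖A v‖ = ‖(A v + gradient (Gn n) θstar) - gradient (Gn n) θstar‖ := congrArg norm heq
      _ ≤ ‖A v + gradient (Gn n) θstar‖ + ‖gradient (Gn n) θstar‖ := norm_sub_le _ _
      _ ≤ (2 * K)⁻¹ * ‖v‖ + c * a n := add_le_add key (hgradb n)
  have hstep : ‖v‖ ≤ K * ((2 * K)⁻¹ * ‖v‖ + c * a n) :=
    (hAv v).trans (mul_le_mul_of_nonneg_left hAvb hK0.le)
  have hexp : K * ((2 * K)⁻¹ * ‖v‖ + c * a n) = ‖v‖ / 2 + K * (c * a n) := by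
    field_simp
  rw [hexp] at hstep
  have hre : 2 * K * c * a n = 2 * (K * (c * a n)) := by ring
  rw [hre]
  clear_value v K
  linarith
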